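/- Let G be a connected labeled Hamiltonian graph on vertex set [n] (i.e., C_n is a subgraph of G). Then the Hankel edge ideal I_G is a radical ideal if and only if G is the complete graph K_n. -/

import Mathlib

open MvPolynomial

/-- The Hankel binomial `g_{ij} = x_i x_{j+1} - x_j x_{i+1}` (0-indexed vertices). -/
noncomputable def hg (n : ℕ) (K : Type*) [Field K] (i j : Fin n) :
    MvPolynomial (Fin (n + 1)) K :=
  X i.castSucc * X j.succ - X j.castSucc * X i.succ

/-- The generating set of the Hankel edge ideal of a graph `G` on `[n]`. -/
noncomputable def hgenSet (n : ℕ) (K : Type*) [Field K] (G : SimpleGraph (Fin n)) :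
    Set (MvPolynomial (Fin (n + 1)) K) :=
  { f | ∃ i j : Fin n, i < j ∧ G.Adj i j ∧ f = hg n K i j }

/-- The Hankel edge ideal `I_G`. -/
noncomputable def hankelIdeal (n : ℕ) (K : Type*) [Field K] (G : SimpleGraph (Fin n)) :
    Ideal (MvPolynomial (Fin (n + 1)) K) :=
  Ideal.span (hgenSet n K G)

/-- `I_X`, the ideal of 2-minors of the 2×n Hankel matrix, i.e. `I_{K_n}`. -/
noncomputable def IX (n : ℕ) (K : Type*) [Field K] :
    Ideal (MvPolynomial (Fin (n + 1)) K) :=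
  hankelIdeal n K ⊤

/-- The height of an ideal: the infimum of the heights of primes containing it. -/
noncomputable def ht {R : Type*} [CommRing R] (I : Ideal R) : ℕ∞ :=
  ⨅ (p : PrimeSpectrum R) (_ : I ≤ p.asIdeal), Order.height p

/-- The minimal number of generators of an ideal. -/
noncomputable def mu {R : Type*} [CommRing R] (I : Ideal R) : ℕ∞ :=
  ⨅ (s : Finset R) (_ : Ideal.span (s : Set R) = I), (s.card : ℕ∞)

/-- The arithmetical rank of an ideal. -/
noncomputable def ara {R : Type*} [CommRing R] (I : Ideal R) : ℕ∞ :=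
  ⨅ (s : Finset R) (_ : (Ideal.span (s : Set R)).radical = I.radical), (s.card : ℕ∞)

/-- The labeled path `L_n` with edges `{i, i+1}` (0-indexed). -/
def pathG (n : ℕ) : SimpleGraph (Fin n) :=
  SimpleGraph.fromRel (fun i j => (i : ℕ) + 1 = (j : ℕ))

/-- The labeled cycle `C_n` with edges `{i, i+1}` and `{0, n-1}` (0-indexed). -/
def cycleG (n : ℕ) : SimpleGraph (Fin n) :=
  SimpleGraph.fromRel (fun i j =>
    (i : ℕ) + 1 = (j : ℕ) ∨ ((i : ℕ) = 0 ∧ (j : ℕ) = n - 1))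

/-- The monomial prime ideal generated by the variables with index in `[lo, hi]` (0-indexed). -/
noncomputable def Pvars (n : ℕ) (K : Type*) [Field K] (lo hi : ℕ) :
    Ideal (MvPolynomial (Fin (n + 1)) K) :=
  Ideal.span { f | ∃ i : Fin (n + 1), lo ≤ (i : ℕ) ∧ (i : ℕ) ≤ hi ∧ f = X i }

namespace HW
variable (n : ℕ) (K : Type*) [Field K]

def fm (k : ℕ) : Fin (n+1) := ⟨min k n, by omega⟩
lemma fm_val {k : ℕ} (h : k ≤ n) : ((fm n k : Fin (n+1)) : ℕ) = k := by simp [fm]; omega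
lemma fm_inj {a b : ℕ} (ha : a ≤ n) (hb : b ≤ n) (h : fm n a = fm n b) : a = b := by
  have := congrArg (Fin.val) h; simp [fm] at this; omega

noncomputable def gN (i j : ℕ) : MvPolynomial (Fin (n+1)) K :=
  X (fm n i) * X (fm n (j+1)) - X (fm n j) * X (fm n (i+1))

lemma gN_eq_hg {i j : ℕ} (hij : i < j) (hj : j < n) :
    gN n K i j = hg n K ⟨i, lt_trans hij hj⟩ ⟨j, hj⟩ := by
  unfold gN hg
  congr 1 <;> congr 1 <;> apply congrArg <;>
    simp [fm, Fin.ext_iff, Fin.castSucc, Fin.succ] <;> omega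

lemma gN_mem {G : SimpleGraph (Fin n)} {i j : ℕ} (hij : i < j) (hj : j < n)
    (hadj : G.Adj ⟨i, lt_trans hij hj⟩ ⟨j, hj⟩) :
    gN n K i j ∈ hankelIdeal n K G := by
  rw [gN_eq_hg n K hij hj]
  exact Ideal.subset_span ⟨_, _, by simpa [Fin.lt_def] using hij, hadj, rfl⟩

lemma pair_eq {α : Type*} [DecidableEq α] {a b c d : α} :
    (Finsupp.single a 1 + Finsupp.single b 1 = Finsupp.single c 1 + Finsupp.single d 1)
      ↔ (a = c ∧ b = d) ∨ (a = d ∧ b = c) := by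
  constructor
  · intro h
    have h2 := congrArg Finsupp.toMultiset h
    simp only [Finsupp.toMultiset_add, Finsupp.toMultiset_single, one_smul] at h2
    have h3 : a ::ₘ ({b} : Multiset α) = c ::ₘ ({d} : Multiset α) := by simpa using h2
    rw [Multiset.cons_eq_cons] at h3
    rcases h3 with ⟨h1, h2'⟩ | ⟨hne, cs, h1, h2'⟩
    · left; exact ⟨h1, by simpa using h2'⟩
    · right
      have hcs : cs = 0 := by
        have := congrArg Multiset.card h1; simpa using this
      subst hcs
      simp at h1 h2'
      exact ⟨h2'.symm, h1⟩
  · rintro (⟨rfl, rfl⟩ | ⟨rfl, rfl⟩)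
    · rfl
    · rw [add_comm]

lemma X_mul_X (a b : Fin (n+1)) :
    (X a * X b : MvPolynomial (Fin (n+1)) K)
      = monomial (Finsupp.single a 1 + Finsupp.single b 1) 1 := by
  rw [X, X, monomial_mul, one_mul]

/-- target-dependent exponents on the antidiagonal chain through (i, j+1) -/
noncomputable def EE (i j p : ℕ) : Fin (n+1) →₀ ℕ :=
  Finsupp.single (fm n p) 1 + Finsupp.single (fm n (i+j+1-p)) 1

lemma two_single_sum (a b : Fin (n+1)) :
    ∑ k, ((Finsupp.single a 1 + Finsupp.single b 1 : Fin (n+1) →₀ ℕ)) k = 2 := by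
  simp [Finsupp.add_apply, Finsupp.single_apply, Finset.sum_add_distrib, Finset.sum_ite_eq]

lemma two_single_le_iff {a b c d : Fin (n+1)}
    (h : Finsupp.single a 1 + Finsupp.single b 1 ≤ Finsupp.single c 1 + Finsupp.single d 1) :
    Finsupp.single a (1:ℕ) + Finsupp.single b 1 = Finsupp.single c 1 + Finsupp.single d 1 := by
  have hpt := Finsupp.le_def.mp h
  have hsum := (two_single_sum n a b).trans (two_single_sum n c d).symm
  apply Finsupp.ext
  intro k
  by_contra hne
  exact absurd hsum
    (Finset.sum_lt_sum (fun m (_ : m ∈ Finset.univ) => hpt m)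
      ⟨k, Finset.mem_univ k, lt_of_le_of_ne (hpt k) hne⟩).ne

/-- value of the functional on a Hankel binomial -/
lemma L_gN (i j c d : ℕ) (hij : i < j) (hj : j < n) (hcd : c < d) (hd : d < n) :
    (∑ p ∈ Finset.Icc (i+j+1-n) i, coeff (EE n i j p) (gN n K c d))
      = if c = i ∧ d = j then (1:K) else 0 := by
  have hA : ∀ p ∈ Finset.Icc (i+j+1-n) i,
      coeff (EE n i j p) (X (fm n c) * X (fm n (d+1)) : MvPolynomial (Fin (n+1)) K)
        = if p = c ∧ c + d = i + j then (1:K) else 0 := by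
    intro p hp
    rw [Finset.mem_Icc] at hp
    rw [X_mul_X, coeff_monomial, EE]
    congr 1
    rw [eq_iff_iff, pair_eq]
    constructor
    · rintro (⟨h1, h2⟩ | ⟨h1, h2⟩)
      · have e1 := fm_inj n (by omega) (by omega) h1
        have e2 := fm_inj n (by omega) (by omega) h2
        omega
      · have e1 := fm_inj n (by omega) (by omega) h1
        have e2 := fm_inj n (by omega) (by omega) h2
        omega
    · rintro ⟨rfl, hQ⟩
      have hd1 : i + j + 1 - p = d + 1 := by omega
      rw [hd1]
      exact Or.inl ⟨rfl, rfl⟩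
  have hB : ∀ p ∈ Finset.Icc (i+j+1-n) i,
      coeff (EE n i j p) (X (fm n d) * X (fm n (c+1)) : MvPolynomial (Fin (n+1)) K)
        = if p = c + 1 ∧ c + d = i + j then (1:K) else 0 := by
    intro p hp
    rw [Finset.mem_Icc] at hp
    rw [X_mul_X, coeff_monomial, EE]
    congr 1
    rw [eq_iff_iff, pair_eq]
    constructor
    · rintro (⟨h1, h2⟩ | ⟨h1, h2⟩)
      · have e1 := fm_inj n (by omega) (by omega) h1
        have e2 := fm_inj n (by omega) (by omega) h2
        omega
      · have e1 := fm_inj n (by omega) (by omega) h1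
        have e2 := fm_inj n (by omega) (by omega) h2
        omega
    · rintro ⟨rfl, hQ⟩
      have hd1 : i + j + 1 - (c+1) = d := by omega
      rw [hd1]
      exact Or.inr ⟨rfl, rfl⟩
  unfold gN
  simp only [coeff_sub, Finset.sum_sub_distrib]
  rw [Finset.sum_congr rfl hA, Finset.sum_congr rfl hB]
  by_cases hQ : c + d = i + j
  · have hmem1 : c ∈ Finset.Icc (i+j+1-n) i ↔ c ≤ i := by rw [Finset.mem_Icc]; omega
    have hmem2 : (c+1) ∈ Finset.Icc (i+j+1-n) i ↔ c+1 ≤ i := by rw [Finset.mem_Icc]; omega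
    simp only [hQ, and_true]
    rw [Finset.sum_ite_eq' (Finset.Icc (i+j+1-n) i) c (fun _ => (1:K)),
        Finset.sum_ite_eq' (Finset.Icc (i+j+1-n) i) (c+1) (fun _ => (1:K))]
    by_cases hc : c = i
    · subst hc
      have hdj : d = j := by omega
      subst hdj
      rw [if_pos (hmem1.mpr le_rfl), if_neg (fun hm => by have := hmem2.mp hm; omega),
          if_pos ⟨rfl, rfl⟩, sub_zero]
    · by_cases hci : c < i
      · rw [if_pos (hmem1.mpr (by omega)), if_pos (hmem2.mpr (by omega)),
            if_neg (fun hcon => hc hcon.1)]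
        exact sub_self 1
      · rw [if_neg (fun hm => by have := hmem1.mp hm; omega),
            if_neg (fun hm => by have := hmem2.mp hm; omega),
            if_neg (fun hcon => hc hcon.1)]
        exact sub_self 0
  · have z1 : ∀ p ∈ Finset.Icc (i+j+1-n) i, (if p = c ∧ c + d = i + j then (1:K) else 0) = 0 := by
      intro p _; rw [if_neg (fun hcon => hQ hcon.2)]
    have z2 : ∀ p ∈ Finset.Icc (i+j+1-n) i, (if p = c + 1 ∧ c + d = i + j then (1:K) else 0) = 0 := by
      intro p _; rw [if_neg (fun hcon => hQ hcon.2)]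
    rw [Finset.sum_congr rfl z1, Finset.sum_congr rfl z2, Finset.sum_const_zero, sub_self,
        if_neg (fun hcon => hQ (by omega))]

lemma hg_eq_gN {a b : Fin n} (hab : a < b) :
    hg n K a b = gN n K (a : ℕ) (b : ℕ) := by
  rw [gN_eq_hg n K (show (a:ℕ) < (b:ℕ) from hab) b.isLt, Fin.eta, Fin.eta]

lemma coeff_mul_gN (i j c d p : ℕ) (r : MvPolynomial (Fin (n+1)) K) :
    coeff (EE n i j p) (r * gN n K c d)
      = coeff 0 r * coeff (EE n i j p) (gN n K c d) := by
  unfold gN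
  rw [X_mul_X, X_mul_X, mul_sub, coeff_sub, coeff_sub]
  have key : ∀ (a b : Fin (n+1)),
      coeff (EE n i j p) (r * monomial (Finsupp.single a 1 + Finsupp.single b 1) (1:K))
        = coeff 0 r * coeff (EE n i j p)
            (monomial (Finsupp.single a 1 + Finsupp.single b 1) (1:K)) := by
    intro a b
    simp only [EE]
    rw [coeff_mul_monomial', coeff_monomial]
    by_cases hle : Finsupp.single a 1 + Finsupp.single b 1
        ≤ Finsupp.single (fm n p) 1 + Finsupp.single (fm n (i+j+1-p)) 1
    · have heq := two_single_le_iff n hle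
      rw [if_pos hle, if_pos heq, heq, tsub_self]
    · rw [if_neg hle, if_neg (fun heq => hle (le_of_eq heq))]
      ring
  rw [key, key]
  ring

lemma not_mem_of_not_adj {G : SimpleGraph (Fin n)} {i j : Fin n} (hij : i < j)
    (hnadj : ¬ G.Adj i j) : hg n K i j ∉ hankelIdeal n K G := by
  intro hmem
  set iN := (i : ℕ) with hiN
  set jN := (j : ℕ) with hjN
  have key : ∀ h ∈ hankelIdeal n K G, ∀ r : MvPolynomial (Fin (n+1)) K,
      (∑ p ∈ Finset.Icc (iN+jN+1-n) iN, coeff (EE n iN jN p) (r * h)) = 0 := by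
    intro h hh
    refine Submodule.span_induction ?_ ?_ ?_ ?_ hh
    · rintro f ⟨a, b, hab, hadj, rfl⟩ r
      rw [hg_eq_gN n K hab]
      have : ∀ p ∈ Finset.Icc (iN+jN+1-n) iN,
          coeff (EE n iN jN p) (r * gN n K (a:ℕ) (b:ℕ))
            = coeff 0 r * coeff (EE n iN jN p) (gN n K (a:ℕ) (b:ℕ)) := by
        intro p _; exact coeff_mul_gN n K iN jN (a:ℕ) (b:ℕ) p r
      rw [Finset.sum_congr rfl this, ← Finset.mul_sum,
          L_gN n K iN jN (a:ℕ) (b:ℕ) hij j.isLt hab b.isLt]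
      rw [if_neg]
      · ring
      · rintro ⟨ha, hb⟩
        exact hnadj (by rwa [show a = i from Fin.ext ha, show b = j from Fin.ext hb] at hadj)
    · intro r
      simp
    · intro x y hx hy hx' hy' r
      have : r * (x + y) = r * x + r * y := by ring
      rw [this]
      simp only [coeff_add, Finset.sum_add_distrib, hx' r, hy' r, add_zero]
    · intro a x hx hx' r
      rw [smul_eq_mul, show r * (a * x) = (r * a) * x by ring]
      exact hx' (r * a)
  have h1 := key _ hmem 1
  rw [one_mul, hg_eq_gN n K hij,
      L_gN n K iN jN iN jN hij j.isLt hij j.isLt, if_pos ⟨rfl, rfl⟩] at h1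
  exact one_ne_zero h1

lemma adj_consec {G : SimpleGraph (Fin n)} (hcyc : cycleG n ≤ G) (i : ℕ) (h : i+1 < n) :
    G.Adj ⟨i, by omega⟩ ⟨i+1, h⟩ := by
  apply hcyc
  rw [cycleG, SimpleGraph.fromRel_adj]
  refine ⟨?_, Or.inl (Or.inl rfl)⟩
  simp [Fin.ext_iff]

lemma adj_last {G : SimpleGraph (Fin n)} (hcyc : cycleG n ≤ G) (h3 : 3 ≤ n) :
    G.Adj ⟨0, by omega⟩ ⟨n-1, by omega⟩ := by
  apply hcyc
  rw [cycleG, SimpleGraph.fromRel_adj]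
  refine ⟨?_, Or.inl (Or.inr ⟨rfl, rfl⟩)⟩
  simp [Fin.ext_iff]
  omega

lemma prod_gN_mem {G : SimpleGraph (Fin n)} (hcyc : cycleG n ≤ G) :
    ∀ k i j : ℕ, j - i = k + 1 → i < j → j < n →
    (∏ t ∈ Finset.Ico (i+1) j, X (fm n t)) * gN n K i j ∈ hankelIdeal n K G := by
  intro k
  induction k with
  | zero =>
    intro i j hk hij hj
    have hji : j = i + 1 := by omega
    subst hji
    rw [Finset.Ico_self, Finset.prod_empty, one_mul]
    exact gN_mem n K hij hj (adj_consec n hcyc i hj)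
  | succ k ih =>
    intro i j hk hij hj
    have hij1 : i + 1 < j := by omega
    rw [Finset.prod_eq_prod_Ico_succ_bot hij1]
    have hid : X (fm n (i+1)) * gN n K i j
        = X (fm n i) * gN n K (i+1) j + X (fm n j) * gN n K i (i+1) := by
      unfold gN; ring
    have key : (X (fm n (i+1)) * ∏ t ∈ Finset.Ico (i+1+1) j, X (fm n t)) * gN n K i j
        = X (fm n i) * ((∏ t ∈ Finset.Ico (i+1+1) j, X (fm n t)) * gN n K (i+1) j)
          + ((∏ t ∈ Finset.Ico (i+1+1) j, X (fm n t)) * X (fm n j)) * gN n K i (i+1) := by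
      linear_combination (∏ t ∈ Finset.Ico (i+1+1) j, X (fm n t)) * hid
    rw [key]
    refine add_mem (Ideal.mul_mem_left _ _ ?_) (Ideal.mul_mem_left _ _ ?_)
    · exact ih (i+1) j (by omega) hij1 hj
    · exact gN_mem n K (by omega) (by omega) (adj_consec n hcyc i (by omega))

lemma step_up {G : SimpleGraph (Fin n)} (hcyc : cycleG n ≤ G) {P : Ideal (MvPolynomial (Fin (n+1)) K)}
    (hP : P.IsPrime) (hle : hankelIdeal n K G ≤ P) (a : ℕ) (h : a + 1 < n)
    (hXa : X (fm n a) ∈ P) : X (fm n (a+1)) ∈ P := by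
  have hgmem : gN n K a (a+1) ∈ P :=
    hle (gN_mem n K (by omega) h (adj_consec n hcyc a h))
  have hsq : X (fm n (a+1)) * X (fm n (a+1)) ∈ P := by
    have : X (fm n (a+1)) * X (fm n (a+1))
        = X (fm n a) * X (fm n (a+1+1)) - gN n K a (a+1) := by
      unfold gN; ring
    rw [this]
    exact sub_mem (Ideal.mul_mem_right _ _ hXa) hgmem
  rcases hP.mem_or_mem hsq with h' | h' <;> exact h'

lemma step_down {G : SimpleGraph (Fin n)} (hcyc : cycleG n ≤ G) {P : Ideal (MvPolynomial (Fin (n+1)) K)}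
    (hP : P.IsPrime) (hle : hankelIdeal n K G ≤ P) (a : ℕ) (h : a + 1 < n)
    (hXa : X (fm n (a+2)) ∈ P) : X (fm n (a+1)) ∈ P := by
  have hgmem : gN n K a (a+1) ∈ P :=
    hle (gN_mem n K (by omega) h (adj_consec n hcyc a h))
  have hsq : X (fm n (a+1)) * X (fm n (a+1)) ∈ P := by
    have : X (fm n (a+1)) * X (fm n (a+1))
        = X (fm n a) * X (fm n (a+2)) - gN n K a (a+1) := by
      unfold gN
      rw [show a+1+1 = a+2 from rfl]
      ring
    rw [this]
    exact sub_mem (Ideal.mul_mem_left _ _ hXa) hgmem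
  rcases hP.mem_or_mem hsq with h' | h' <;> exact h'

lemma mid_vars_mem {G : SimpleGraph (Fin n)} (hcyc : cycleG n ≤ G)
    {P : Ideal (MvPolynomial (Fin (n+1)) K)} (hP : P.IsPrime)
    (hle : hankelIdeal n K G ≤ P) (k₀ : ℕ) (h1 : 1 ≤ k₀) (h2 : k₀ ≤ n-1)
    (hk₀ : X (fm n k₀) ∈ P) :
    ∀ m : ℕ, 1 ≤ m → m ≤ n-1 → X (fm n m) ∈ P := by
  have hup : ∀ t, k₀ + t ≤ n-1 → X (fm n (k₀+t)) ∈ P := by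
    intro t
    induction t with
    | zero => intro _; simpa using hk₀
    | succ t iht =>
      intro ht
      have := step_up n K hcyc hP hle (k₀+t) (by omega) (iht (by omega))
      simpa [show k₀+t+1 = k₀+(t+1) from rfl] using this
  have hdown : ∀ t, t ≤ k₀ - 1 → X (fm n (k₀-t)) ∈ P := by
    intro t
    induction t with
    | zero => intro _; simpa using hk₀
    | succ t iht =>
      intro ht
      have hprev := iht (by omega)
      have he : k₀ - t = (k₀ - t - 2) + 2 := by omega
      rw [he] at hprev
      have := step_down n K hcyc hP hle (k₀-t-2) (by omega) hprev
      have he2 : k₀ - t - 2 + 1 = k₀ - (t+1) := by omega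
      rwa [he2] at this
  intro m hm1 hm2
  rcases le_or_gt k₀ m with hcmp | hcmp
  · have := hup (m - k₀) (by omega)
    rwa [show k₀ + (m - k₀) = m by omega] at this
  · have := hdown (k₀ - m) (by omega)
    rwa [show k₀ - (k₀ - m) = m by omega] at this

lemma gN_mem_prime {G : SimpleGraph (Fin n)} (hcyc : cycleG n ≤ G) (h3 : 3 ≤ n)
    {P : Ideal (MvPolynomial (Fin (n+1)) K)} (hP : P.IsPrime)
    (hle : hankelIdeal n K G ≤ P) (i j : ℕ) (hij : i < j) (hj : j < n) :
    gN n K i j ∈ P := by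
  by_cases hmid : ∃ k, 1 ≤ k ∧ k ≤ n-1 ∧ X (fm n k) ∈ P
  · obtain ⟨k₀, h1, h2, hk⟩ := hmid
    have hall := mid_vars_mem n K hcyc hP hle k₀ h1 h2 hk
    by_cases hcase : i = 0 ∧ j = n-1
    · obtain ⟨hi0, hjn⟩ := hcase
      subst hi0; subst hjn
      exact hle (gN_mem n K hij hj (adj_last n hcyc h3))
    · unfold gN
      apply sub_mem
      · rcases Nat.eq_zero_or_pos i with hi0 | hip
        · subst hi0
          exact Ideal.mul_mem_left _ _ (hall (j+1) (by omega) (by omega))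
        · exact Ideal.mul_mem_right _ _ (hall i (by omega) (by omega))
      · exact Ideal.mul_mem_left _ _ (hall (i+1) (by omega) (by omega))
  · push_neg at hmid
    have hprod := hle (prod_gN_mem n K hcyc (j-i-1) i j (by omega) hij hj)
    rcases hP.mem_or_mem hprod with hin | hin
    · exfalso
      rw [Ideal.IsPrime.prod_mem_iff] at hin
      obtain ⟨t, htmem, htP⟩ := hin
      rw [Finset.mem_Ico] at htmem
      exact absurd htP (hmid t (by omega) (by omega))
    · exact hin

/-! ### The toric kernel argument -/

noncomputable def IXw : Ideal (MvPolynomial (Fin (n+1)) K) := hankelIdeal n K ⊤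

def Wf (f : Fin (n+1) → ℕ) (u : Fin (n+1) →₀ ℕ) : ℕ := ∑ k, f k * u k

lemma Wf_add (f : Fin (n+1) → ℕ) (u v : Fin (n+1) →₀ ℕ) :
    Wf n f (u + v) = Wf n f u + Wf n f v := by
  unfold Wf
  rw [← Finset.sum_add_distrib]
  exact Finset.sum_congr rfl (fun k _ => by rw [Finsupp.add_apply, mul_add])

lemma Wf_single (f : Fin (n+1) → ℕ) (a : Fin (n+1)) (m : ℕ) :
    Wf n f (Finsupp.single a m) = f a * m := by
  unfold Wf
  rw [Finset.sum_eq_single a]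
  · rw [Finsupp.single_apply, if_pos rfl]
  · intro k _ hk
    rw [Finsupp.single_apply, if_neg (fun h => hk h.symm), mul_zero]
  · intro h; exact absurd (Finset.mem_univ a) h

noncomputable def phiH : MvPolynomial (Fin (n+1)) K →ₐ[K] MvPolynomial (Fin 2) K :=
  aeval (fun i : Fin (n+1) => (X 0 : MvPolynomial (Fin 2) K)^(n - (i:ℕ)) * (X 1)^((i:ℕ)))

noncomputable def PsiE (u : Fin (n+1) →₀ ℕ) : Fin 2 →₀ ℕ :=
  Finsupp.single 0 (Wf n (fun k => n - (k:ℕ)) u) + Finsupp.single 1 (Wf n (fun k => (k:ℕ)) u)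

lemma prod_monomial {α : Type*} (s : Finset α) (e : α → (Fin 2 →₀ ℕ)) :
    (∏ a ∈ s, monomial (e a) (1:K)) = monomial (∑ a ∈ s, e a) 1 := by
  induction s using Finset.cons_induction with
  | empty => rw [Finset.prod_empty, Finset.sum_empty, monomial_zero', C_1]
  | cons a s ha ih =>
    rw [Finset.prod_cons, Finset.sum_cons, ih, monomial_mul, one_mul]

lemma phiH_monomial (u : Fin (n+1) →₀ ℕ) (c : K) :
    phiH n K (monomial u c) = monomial (PsiE n u) c := by
  unfold phiH
  rw [aeval_monomial]
  have hfac : ∀ i : Fin (n+1), ∀ k : ℕ,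
      ((X 0 : MvPolynomial (Fin 2) K)^(n - (i:ℕ)) * (X 1)^((i:ℕ)))^k
        = monomial (Finsupp.single 0 ((n - (i:ℕ))*k) + Finsupp.single 1 ((i:ℕ)*k)) 1 := by
    intro i k
    rw [X_pow_eq_monomial, X_pow_eq_monomial, monomial_mul, one_mul, monomial_pow, one_pow,
        smul_add, Finsupp.smul_single, Finsupp.smul_single, smul_eq_mul, smul_eq_mul,
        mul_comm k _, mul_comm k _]
  rw [Finsupp.prod]
  rw [Finset.prod_congr rfl (fun i _ => hfac i (u i)), prod_monomial]
  have hsupp : ∑ i ∈ u.support,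
      (Finsupp.single (0 : Fin 2) ((n - (i:ℕ))*(u i)) + Finsupp.single 1 ((i:ℕ)*(u i)))
      = ∑ i : Fin (n+1),
      (Finsupp.single (0 : Fin 2) ((n - (i:ℕ))*(u i)) + Finsupp.single 1 ((i:ℕ)*(u i))) := by
    apply Finset.sum_subset (Finset.subset_univ _)
    intro i _ hi
    rw [Finsupp.notMem_support_iff] at hi
    simp [hi]
  have hsum_single : ∀ (c : Fin 2) (g : Fin (n+1) → ℕ),
      (∑ x, Finsupp.single c (g x)) = Finsupp.single c (∑ x, g x) :=
    fun c g => (map_sum (Finsupp.singleAddHom c) g Finset.univ).symm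
  rw [hsupp, Finset.sum_add_distrib, hsum_single, hsum_single]
  have : algebraMap K (MvPolynomial (Fin 2) K) c = C c := rfl
  rw [this, C_mul_monomial, mul_one, PsiE]
  rfl

lemma phi_gN {i j : ℕ} (hij : i < j) (hj : j < n) : phiH n K (gN n K i j) = 0 := by
  unfold gN
  rw [X_mul_X, X_mul_X, map_sub, phiH_monomial, phiH_monomial, sub_eq_zero]
  congr 1
  unfold PsiE
  rw [Wf_add, Wf_add, Wf_add, Wf_add, Wf_single, Wf_single, Wf_single, Wf_single,
      Wf_single, Wf_single, Wf_single, Wf_single]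
  rw [fm_val n (by omega), fm_val n (by omega), fm_val n (by omega), fm_val n (by omega)]
  have h0 : (n - i) * 1 + (n - (j + 1)) * 1 = (n - j) * 1 + (n - (i + 1)) * 1 := by omega
  have h1 : i * 1 + (j + 1) * 1 = j * 1 + (i + 1) * 1 := by omega
  rw [h0, h1]

def Tot (u : Fin (n+1) →₀ ℕ) : ℕ := Wf n (fun _ => 1) u
def Wt (u : Fin (n+1) →₀ ℕ) : ℕ := Wf n (fun k => (k:ℕ)) u
def Mid (u : Fin (n+1) →₀ ℕ) : ℕ := Wf n (fun k => if 1 ≤ (k:ℕ) ∧ (k:ℕ) ≤ n-1 then 1 else 0) u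
def MidW (u : Fin (n+1) →₀ ℕ) : ℕ := Wf n (fun k => if 1 ≤ (k:ℕ) ∧ (k:ℕ) ≤ n-1 then (k:ℕ) else 0) u
def Qd (u : Fin (n+1) →₀ ℕ) : ℕ := Wf n (fun k => (k:ℕ)^2) u

lemma sum_point (a : Fin (n+1)) (m : ℕ) (u : Fin (n+1) →₀ ℕ) :
    ∑ k : Fin (n+1), (if (k:ℕ) = (a:ℕ) then m else 0) * u k = m * u a := by
  rw [Finset.sum_eq_single a]
  · rw [if_pos rfl]
  · intro k _ hk
    rw [if_neg (fun h => hk (Fin.ext h)), zero_mul]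
  · intro h; exact absurd (Finset.mem_univ a) h

lemma Wt_decomp (hn : 0 < n) (u : Fin (n+1) →₀ ℕ) :
    Wt n u = MidW n u + n * u ⟨n, by omega⟩ := by
  have hpt : ∀ (kv c : ℕ), kv ≤ n →
      kv * c = (if 1 ≤ kv ∧ kv ≤ n-1 then kv else 0) * c + (if kv = n then n else 0) * c := by
    intro kv c hkv
    by_cases h1 : 1 ≤ kv ∧ kv ≤ n-1
    · rw [if_pos h1, if_neg (by omega)]; ring
    · by_cases h2 : kv = n
      · subst h2; rw [if_neg h1, if_pos rfl]; ring
      · have h3 : kv = 0 := by omega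
        subst h3; rw [if_neg h1, if_neg h2]; ring
  simp only [Wt, MidW, Wf]
  have hlast : n * u ⟨n, by omega⟩
      = ∑ k : Fin (n+1), (if (k:ℕ) = ((⟨n, by omega⟩ : Fin (n+1)):ℕ) then n else 0) * u k := by
    rw [sum_point n]
  rw [hlast, ← Finset.sum_add_distrib]
  exact Finset.sum_congr rfl (fun k _ => hpt (k:ℕ) (u k) (by omega))

lemma Tot_decomp (hn : 0 < n) (u : Fin (n+1) →₀ ℕ) :
    Tot n u = u ⟨0, by omega⟩ + Mid n u + u ⟨n, by omega⟩ := by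
  have hpt : ∀ (kv c : ℕ), kv ≤ n →
      1 * c = (if kv = 0 then 1 else 0) * c + (if 1 ≤ kv ∧ kv ≤ n-1 then 1 else 0) * c
        + (if kv = n then 1 else 0) * c := by
    intro kv c hkv
    by_cases h0 : kv = 0
    · subst h0; rw [if_pos rfl, if_neg (by omega), if_neg (by omega)]; ring
    · by_cases h1 : 1 ≤ kv ∧ kv ≤ n-1
      · rw [if_neg h0, if_pos h1, if_neg (by omega)]; ring
      · have h2 : kv = n := by omega
        subst h2; rw [if_neg h0, if_neg h1, if_pos rfl]; ring
  simp only [Tot, Mid, Wf]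
  have h1 := (sum_point n ⟨0, by omega⟩ 1 u).trans (one_mul _)
  have h2 := (sum_point n ⟨n, by omega⟩ 1 u).trans (one_mul _)
  rw [← h1, ← h2, ← Finset.sum_add_distrib, ← Finset.sum_add_distrib]
  exact Finset.sum_congr rfl (fun k _ => hpt (k:ℕ) (u k) (by omega))

lemma MidW_lt (hn : 0 < n) {u : Fin (n+1) →₀ ℕ} (hu : Mid n u ≤ 1) : MidW n u < n := by
  have hle : MidW n u ≤ (n-1) * Mid n u := by
    simp only [MidW, Mid, Wf]
    rw [Finset.mul_sum]
    apply Finset.sum_le_sum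
    intro k _
    by_cases hk : 1 ≤ (k:ℕ) ∧ (k:ℕ) ≤ n-1
    · rw [if_pos hk, if_pos hk]
      calc (k:ℕ) * u k ≤ (n-1) * u k := Nat.mul_le_mul_right _ hk.2
      _ = (n-1) * (1 * u k) := by ring
    · rw [if_neg hk, if_neg hk]; simp
  have := Nat.mul_le_mul_left (n-1) hu
  omega

lemma normal_struct (hn : 0 < n) {u : Fin (n+1) →₀ ℕ} (hu : Mid n u ≤ 1) :
    (∀ k : Fin (n+1), (1 ≤ (k:ℕ) ∧ (k:ℕ) ≤ n-1)
        → u k = if (k:ℕ) = MidW n u then 1 else 0)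
    ∧ Mid n u = (if MidW n u = 0 then 0 else 1) := by
  rcases Nat.le_one_iff_eq_zero_or_eq_one.mp hu with h0 | h1
  · rw [Mid, Wf] at h0
    have hz := Finset.sum_eq_zero_iff.mp h0
    have humid : ∀ k : Fin (n+1), (1 ≤ (k:ℕ) ∧ (k:ℕ) ≤ n-1) → u k = 0 := by
      intro k hk
      have := hz k (Finset.mem_univ k)
      rwa [if_pos hk, one_mul] at this
    have hMW : MidW n u = 0 := by
      rw [MidW, Wf]
      apply Finset.sum_eq_zero
      intro k _
      by_cases hk : 1 ≤ (k:ℕ) ∧ (k:ℕ) ≤ n-1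
      · rw [if_pos hk, humid k hk, mul_zero]
      · rw [if_neg hk, zero_mul]
    refine ⟨fun k hk => ?_, by rw [hMW, if_pos rfl]; rw [Mid, Wf]; exact h0⟩
    rw [humid k hk, hMW, if_neg (by omega)]
  · have hex : ∃ k₀ : Fin (n+1), (1 ≤ (k₀:ℕ) ∧ (k₀:ℕ) ≤ n-1) ∧ u k₀ ≠ 0 := by
      by_contra hno
      push_neg at hno
      have : Mid n u = 0 := by
        rw [Mid, Wf]
        apply Finset.sum_eq_zero
        intro k _
        by_cases hk : 1 ≤ (k:ℕ) ∧ (k:ℕ) ≤ n-1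
        · rw [if_pos hk, one_mul]; exact hno k hk
        · rw [if_neg hk, zero_mul]
      omega
    obtain ⟨k₀, hk₀m, hk₀u⟩ := hex
    have hsplit := Finset.add_sum_erase Finset.univ
      (fun k : Fin (n+1) => (if 1 ≤ (k:ℕ) ∧ (k:ℕ) ≤ n-1 then 1 else 0) * u k)
      (Finset.mem_univ k₀)
    simp only [if_pos hk₀m, one_mul] at hsplit
    have hMidu : Mid n u
        = u k₀ + ∑ k ∈ Finset.univ.erase k₀,
            (if 1 ≤ (k:ℕ) ∧ (k:ℕ) ≤ n-1 then 1 else 0) * u k := by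
      rw [Mid, Wf]; exact hsplit.symm
    have huk₀ : u k₀ = 1 := by omega
    have hrest : ∑ k ∈ Finset.univ.erase k₀,
        (if 1 ≤ (k:ℕ) ∧ (k:ℕ) ≤ n-1 then 1 else 0) * u k = 0 := by omega
    have hz2 := Finset.sum_eq_zero_iff.mp hrest
    have humid : ∀ k : Fin (n+1), k ≠ k₀ → (1 ≤ (k:ℕ) ∧ (k:ℕ) ≤ n-1) → u k = 0 := by
      intro k hk hm
      have := hz2 k (Finset.mem_erase.mpr ⟨hk, Finset.mem_univ k⟩)
      rwa [if_pos hm, one_mul] at this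
    have hMW : MidW n u = (k₀:ℕ) := by
      rw [MidW, Wf]
      rw [← Finset.add_sum_erase Finset.univ _ (Finset.mem_univ k₀), if_pos hk₀m, huk₀,
          mul_one, Finset.sum_eq_zero, add_zero]
      intro k hk
      rw [Finset.mem_erase] at hk
      by_cases hm : 1 ≤ (k:ℕ) ∧ (k:ℕ) ≤ n-1
      · rw [if_pos hm, humid k hk.1 hm, mul_zero]
      · rw [if_neg hm, zero_mul]
    constructor
    · intro k hk
      by_cases hkk : k = k₀
      · subst hkk; rw [huk₀, hMW, if_pos rfl]
      · rw [humid k hkk hk, hMW, if_neg (fun h => hkk (Fin.ext h))]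
    · rw [hMW, h1, if_neg (by omega)]

lemma normal_inj (hn : 0 < n) {u v : Fin (n+1) →₀ ℕ} (hu : Mid n u ≤ 1) (hv : Mid n v ≤ 1)
    (hT : Tot n u = Tot n v) (hW : Wt n u = Wt n v) : u = v := by
  have hdu := Wt_decomp n hn u
  have hdv := Wt_decomp n hn v
  have hlu := MidW_lt n hn hu
  have hlv := MidW_lt n hn hv
  have hmodu : MidW n u = Wt n u % n := by
    rw [hdu, Nat.add_mul_mod_self_left, Nat.mod_eq_of_lt hlu]
  have hmodv : MidW n v = Wt n v % n := by
    rw [hdv, Nat.add_mul_mod_self_left, Nat.mod_eq_of_lt hlv]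
  have hMWeq : MidW n u = MidW n v := by rw [hmodu, hmodv, hW]
  have hdivu : u ⟨n, by omega⟩ = Wt n u / n := by
    rw [hdu, Nat.add_mul_div_left _ _ hn, Nat.div_eq_of_lt hlu, zero_add]
  have hdivv : v ⟨n, by omega⟩ = Wt n v / n := by
    rw [hdv, Nat.add_mul_div_left _ _ hn, Nat.div_eq_of_lt hlv, zero_add]
  have hneq : u ⟨n, by omega⟩ = v ⟨n, by omega⟩ := by rw [hdivu, hdivv, hW]
  have hsu := normal_struct n hn hu
  have hsv := normal_struct n hn hv
  have hMideq : Mid n u = Mid n v := by rw [hsu.2, hsv.2, hMWeq]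
  have h0eq : u ⟨0, by omega⟩ = v ⟨0, by omega⟩ := by
    have h1 := Tot_decomp n hn u
    have h2 := Tot_decomp n hn v
    omega
  apply Finsupp.ext
  intro k
  rcases Nat.lt_or_ge ((k:ℕ)) 1 with hk0 | hk1
  · have : k = ⟨0, by omega⟩ := Fin.ext (by show (k:ℕ) = 0; omega)
    rw [this]; exact h0eq
  · rcases Nat.lt_or_ge ((k:ℕ)) n with hkn | hkn
    · rw [hsu.1 k ⟨hk1, by omega⟩, hsv.1 k ⟨hk1, by omega⟩, hMWeq]
    · have : k = ⟨n, by omega⟩ := Fin.ext (by simp; omega)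
      rw [this]; exact hneq

lemma Qd_le (u : Fin (n+1) →₀ ℕ) : Qd n u ≤ n^2 * Tot n u := by
  simp only [Qd, Tot, Wf]
  rw [Finset.mul_sum]
  apply Finset.sum_le_sum
  intro k _
  rw [one_mul]
  exact Nat.mul_le_mul_right _ (Nat.pow_le_pow_left (by omega) 2)

lemma Wf_addpair (f : Fin (n+1) → ℕ) (w : Fin (n+1) →₀ ℕ) (a b : Fin (n+1)) :
    Wf n f (w + (Finsupp.single a 1 + Finsupp.single b 1)) = Wf n f w + f a + f b := by
  rw [Wf_add, Wf_add, Wf_single, Wf_single, mul_one, mul_one, add_assoc]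

lemma Wf_split (f : Fin (n+1) → ℕ) (u : Fin (n+1) →₀ ℕ) {a b : Fin (n+1)}
    (hle : Finsupp.single a 1 + Finsupp.single b 1 ≤ u) :
    Wf n f u = Wf n f (u - (Finsupp.single a 1 + Finsupp.single b 1)) + f a + f b := by
  conv_lhs => rw [← tsub_add_cancel_of_le hle]
  rw [Wf_addpair]

lemma pair_le {u : Fin (n+1) →₀ ℕ} {a b : Fin (n+1)} (hab : a ≠ b)
    (ha : 1 ≤ u a) (hb : 1 ≤ u b) :
    Finsupp.single a 1 + Finsupp.single b 1 ≤ u := by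
  rw [Finsupp.le_def]
  intro k
  rw [Finsupp.add_apply, Finsupp.single_apply, Finsupp.single_apply]
  by_cases h1 : a = k
  · subst h1
    rw [if_pos rfl, if_neg (fun h => hab h.symm)]
    omega
  · by_cases h2 : b = k
    · subst h2
      rw [if_neg h1, if_pos rfl]
      omega
    · rw [if_neg h1, if_neg h2]
      omega

lemma pair_le_self {u : Fin (n+1) →₀ ℕ} {a : Fin (n+1)} (ha : 2 ≤ u a) :
    Finsupp.single a 1 + Finsupp.single a 1 ≤ u := by
  rw [Finsupp.le_def]
  intro k
  rw [Finsupp.add_apply, Finsupp.single_apply]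
  by_cases h1 : a = k
  · subst h1; rw [if_pos rfl]; omega
  · rw [if_neg h1]; omega

lemma exists_pair {u : Fin (n+1) →₀ ℕ} (h2 : 2 ≤ Mid n u) :
    ∃ a b : Fin (n+1), (1 ≤ (a:ℕ) ∧ (a:ℕ) ≤ n-1) ∧ (1 ≤ (b:ℕ) ∧ (b:ℕ) ≤ n-1)
      ∧ (a:ℕ) ≤ (b:ℕ) ∧ Finsupp.single a 1 + Finsupp.single b 1 ≤ u := by
  rw [Mid, Wf] at h2
  have hex : ∃ a : Fin (n+1), (1 ≤ (a:ℕ) ∧ (a:ℕ) ≤ n-1) ∧ 1 ≤ u a := by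
    by_contra hno
    push_neg at hno
    have hzz : ∑ k : Fin (n+1), (if 1 ≤ (k:ℕ) ∧ (k:ℕ) ≤ n-1 then 1 else 0) * u k = 0 := by
      apply Finset.sum_eq_zero
      intro k _
      by_cases hk : 1 ≤ (k:ℕ) ∧ (k:ℕ) ≤ n-1
      · rw [if_pos hk, one_mul]
        have := hno k hk
        omega
      · rw [if_neg hk, zero_mul]
    omega
  obtain ⟨a, ham, hau⟩ := hex
  rcases Nat.lt_or_ge (u a) 2 with hlt | hge
  · have hsplit := Finset.add_sum_erase Finset.univ
      (fun k : Fin (n+1) => (if 1 ≤ (k:ℕ) ∧ (k:ℕ) ≤ n-1 then 1 else 0) * u k)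
      (Finset.mem_univ a)
    simp only [if_pos ham, one_mul] at hsplit
    have hex2 : ∃ b ∈ Finset.univ.erase a, (1 ≤ (b:ℕ) ∧ (b:ℕ) ≤ n-1) ∧ 1 ≤ u b := by
      by_contra hno
      push_neg at hno
      have hz2 : ∑ k ∈ Finset.univ.erase a,
          (if 1 ≤ (k:ℕ) ∧ (k:ℕ) ≤ n-1 then 1 else 0) * u k = 0 := by
        apply Finset.sum_eq_zero
        intro k hk
        by_cases hm : 1 ≤ (k:ℕ) ∧ (k:ℕ) ≤ n-1
        · rw [if_pos hm, one_mul]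
          have := hno k hk hm
          omega
        · rw [if_neg hm, zero_mul]
      omega
    obtain ⟨b, hbe, hbm, hbu⟩ := hex2
    have hne : b ≠ a := (Finset.mem_erase.mp hbe).1
    rcases le_total ((a:ℕ)) ((b:ℕ)) with h | h
    · exact ⟨a, b, ham, hbm, h, pair_le n (fun hh => hne hh.symm) hau hbu⟩
    · exact ⟨b, a, hbm, ham, h, pair_le n hne hbu hau⟩
  · exact ⟨a, a, ham, ham, le_rfl, pair_le_self n hge⟩

lemma reduce (h3 : 3 ≤ n) : ∀ N : ℕ, ∀ u : Fin (n+1) →₀ ℕ, n^2 * Tot n u - Qd n u ≤ N →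
    ∃ v, Mid n v ≤ 1 ∧ Tot n v = Tot n u ∧ Wt n v = Wt n u
      ∧ monomial u (1:K) - monomial v 1 ∈ IXw n K := by
  intro N
  induction N using Nat.strong_induction_on with
  | _ N ih =>
  intro u hN
  by_cases hnorm : Mid n u ≤ 1
  · exact ⟨u, hnorm, rfl, rfl, by rw [sub_self]; exact zero_mem _⟩
  · obtain ⟨a, b, ham, hbm, hab, hle⟩ := exists_pair n (u := u) (by omega)
    have hA'v : ((fm n ((a:ℕ) - 1)) : ℕ) = (a:ℕ) - 1 := fm_val n (by omega)
    have hB'v : ((fm n ((b:ℕ) + 1)) : ℕ) = (b:ℕ) + 1 := fm_val n (by omega)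
    have hfma : fm n ((a:ℕ)) = a := Fin.ext (by simp [fm]; omega)
    have hfmb : fm n ((b:ℕ)) = b := Fin.ext (by simp [fm]; omega)
    set u' := u - (Finsupp.single a 1 + Finsupp.single b 1) with hu'
    set v₂ := u' + (Finsupp.single (fm n ((a:ℕ) - 1)) 1 + Finsupp.single (fm n ((b:ℕ) + 1)) 1)
      with hv₂
    have hadd : u' + (Finsupp.single a 1 + Finsupp.single b 1) = u := tsub_add_cancel_of_le hle
    have hdiff : monomial u (1:K) - monomial v₂ 1 ∈ IXw n K := by
      have hfac : monomial u (1:K) - monomial v₂ 1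
          = monomial u' 1 * (monomial (Finsupp.single a 1 + Finsupp.single b 1) 1
              - monomial (Finsupp.single (fm n ((a:ℕ) - 1)) 1
                  + Finsupp.single (fm n ((b:ℕ) + 1)) 1) 1) := by
        rw [mul_sub, monomial_mul, monomial_mul, mul_one, hadd, hv₂]
      have hgmem : gN n K ((a:ℕ) - 1) ((b:ℕ)) ∈ IXw n K := by
        apply gN_mem n K (show (a:ℕ)-1 < (b:ℕ) by omega) (by omega)
        simp only [SimpleGraph.top_adj, ne_eq, Fin.mk.injEq]
        omega
      have hginner : monomial (Finsupp.single a 1 + Finsupp.single b 1) (1:K)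
          - monomial (Finsupp.single (fm n ((a:ℕ) - 1)) 1
              + Finsupp.single (fm n ((b:ℕ) + 1)) 1) 1
          = -(gN n K ((a:ℕ)-1) ((b:ℕ))) := by
        rw [← X_mul_X, ← X_mul_X]
        unfold gN
        rw [show (a:ℕ) - 1 + 1 = (a:ℕ) by omega, hfma, hfmb]
        ring
      rw [hfac, hginner]
      exact Ideal.mul_mem_left _ _ (neg_mem hgmem)
    have hT2 : Tot n v₂ = Tot n u := by
      rw [hv₂]
      rw [show Tot n u = Wf n (fun _ => 1) u from rfl, Wf_split n _ u hle]
      rw [show Tot n (u' + _) = Wf n (fun _ => 1) (u' + _) from rfl, Wf_addpair]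
    have hW2 : Wt n v₂ = Wt n u := by
      rw [hv₂]
      rw [show Wt n u = Wf n (fun k => (k:ℕ)) u from rfl, Wf_split n _ u hle]
      rw [show Wt n (u' + _) = Wf n (fun k => (k:ℕ)) (u' + _) from rfl, Wf_addpair]
      rw [← hu']
      simp only [hA'v, hB'v]
      omega
    have hQ2 : Qd n v₂ = Qd n u' + (((a:ℕ)-1)^2 + ((b:ℕ)+1)^2) := by
      rw [hv₂]
      rw [show Qd n (u' + _) = Wf n (fun k => (k:ℕ)^2) (u' + _) from rfl, Wf_addpair]
      simp only [hA'v, hB'v, Qd]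
      ring
    have hQ1 : Qd n u = Qd n u' + ((a:ℕ)^2 + (b:ℕ)^2) := by
      rw [show Qd n u = Wf n (fun k => (k:ℕ)^2) u from rfl, Wf_split n _ u hle]
      rw [← hu']
      simp only [Qd]
      ring
    have hQlt : Qd n u < Qd n v₂ := by
      rw [hQ1, hQ2]
      have hsq : (a:ℕ)^2 + (b:ℕ)^2 < ((a:ℕ)-1)^2 + ((b:ℕ)+1)^2 := by
        obtain ⟨a0, ha0⟩ : ∃ a0, (a:ℕ) = a0 + 1 := ⟨(a:ℕ)-1, by omega⟩
        rw [ha0, Nat.add_sub_cancel]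
        have hba : a0 < (b:ℕ) := by omega
        nlinarith
      omega
    have hQb := Qd_le n v₂
    rw [hT2] at hQb
    have hmeas : n ^ 2 * Tot n v₂ - Qd n v₂ < N := by
      have h1 : n ^ 2 * Tot n v₂ = n ^ 2 * Tot n u := by rw [hT2]
      omega
    obtain ⟨v, hv1, hvT, hvW, hvM⟩ := ih (n^2 * Tot n v₂ - Qd n v₂) hmeas v₂ le_rfl
    refine ⟨v, hv1, hvT.trans hT2, hvW.trans hW2, ?_⟩
    have : monomial u (1:K) - monomial v 1
        = (monomial u 1 - monomial v₂ 1) + (monomial v₂ 1 - monomial v 1) := by ring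
    rw [this]
    exact add_mem hdiff hvM

lemma phi_IXw {g : MvPolynomial (Fin (n+1)) K} (hgm : g ∈ IXw n K) : phiH n K g = 0 := by
  refine Submodule.span_induction ?_ ?_ ?_ ?_ hgm
  · rintro f ⟨a, b, hab, -, rfl⟩
    rw [hg_eq_gN n K hab]
    exact phi_gN n K hab b.isLt
  · exact map_zero _
  · intro x y _ _ hx hy
    rw [map_add, hx, hy, add_zero]
  · intro c x _ hx
    rw [smul_eq_mul, map_mul, hx, mul_zero]

lemma nTot (u : Fin (n+1) →₀ ℕ) :
    Wf n (fun k => n - (k:ℕ)) u + Wt n u = n * Tot n u := by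
  simp only [Wt, Tot, Wf]
  rw [Finset.mul_sum, ← Finset.sum_add_distrib]
  apply Finset.sum_congr rfl
  intro k _
  rw [← add_mul, show (n - (k:ℕ)) + (k:ℕ) = n by omega, one_mul]

lemma mem_IXw_of_phi (h3 : 3 ≤ n) {f : MvPolynomial (Fin (n+1)) K}
    (hf : phiH n K f = 0) : f ∈ IXw n K := by
  have H : ∀ u : Fin (n+1) →₀ ℕ, ∃ v, Mid n v ≤ 1 ∧ Tot n v = Tot n u ∧ Wt n v = Wt n u
      ∧ monomial u (1:K) - monomial v 1 ∈ IXw n K :=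
    fun u => reduce n K h3 _ u le_rfl
  choose nv hnv1 hnv2 hnv3 hnv4 using H
  set h := ∑ u ∈ f.support, monomial (nv u) (coeff u f) with hh
  have hdiff : f - h ∈ IXw n K := by
    nth_rewrite 1 [f.as_sum]
    rw [hh, ← Finset.sum_sub_distrib]
    apply Ideal.sum_mem
    intro u hu
    have hterm : monomial u (coeff u f) - monomial (nv u) (coeff u f)
        = C (coeff u f) * (monomial u (1:K) - monomial (nv u) 1) := by
      rw [mul_sub, C_mul_monomial, C_mul_monomial, mul_one]
    rw [hterm]
    exact Ideal.mul_mem_left _ _ (hnv4 u)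
  have hphih : phiH n K h = 0 := by
    have h1 : phiH n K (f - h) = 0 := phi_IXw n K hdiff
    rw [map_sub, hf, zero_sub, neg_eq_zero] at h1
    exact h1
  have hnormsupp : ∀ w ∈ h.support, Mid n w ≤ 1 := by
    intro w hw
    rw [mem_support_iff] at hw
    by_contra hnm
    apply hw
    rw [hh, coeff_sum]
    apply Finset.sum_eq_zero
    intro u hu
    rw [coeff_monomial, if_neg]
    intro hequ
    exact hnm (hequ ▸ hnv1 u)
  have hzero : h = 0 := by
    by_contra h0
    obtain ⟨w, hw⟩ := support_nonempty.mpr h0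
    have hrep : phiH n K h = ∑ u ∈ h.support, monomial (PsiE n u) (coeff u h) := by
      conv_lhs => rw [h.as_sum]
      rw [map_sum]
      exact Finset.sum_congr rfl (fun u _ => phiH_monomial n K u _)
    have hcw : coeff (PsiE n w) (phiH n K h) = coeff w h := by
      rw [hrep, coeff_sum]
      have hothers : ∀ u ∈ h.support, u ≠ w →
          coeff (PsiE n w) (monomial (PsiE n u) (coeff u h)) = 0 := by
        intro u hu hne
        rw [coeff_monomial]
        refine if_neg (fun hPsi => hne ?_)
        have h0c := congrArg (fun t : Fin 2 →₀ ℕ => t 0) hPsi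
        have h1c := congrArg (fun t : Fin 2 →₀ ℕ => t 1) hPsi
        simp only [PsiE, Finsupp.add_apply, Finsupp.single_apply] at h0c h1c
        simp only [if_true, if_neg (by decide : ¬((1:Fin 2) = 0)),
          if_neg (by decide : ¬((0:Fin 2) = 1)), add_zero, zero_add] at h0c h1c
        have hWteq : Wt n u = Wt n w := h1c
        have hTeq : Tot n u = Tot n w := by
          have e1 := nTot n u
          have e2 := nTot n w
          have : n * Tot n u = n * Tot n w := by omega
          exact Nat.eq_of_mul_eq_mul_left (by omega) this
        exact normal_inj n (by omega) (hnormsupp u hu) (hnormsupp w hw) hTeq hWteq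
      rw [Finset.sum_eq_single w hothers (fun hnw => absurd hw hnw)]
      rw [coeff_monomial, if_pos rfl]
    rw [hphih, coeff_zero] at hcw
    rw [mem_support_iff] at hw
    exact hw hcw.symm
  rw [hzero, sub_zero] at hdiff
  exact hdiff

lemma IXw_isRadical (h3 : 3 ≤ n) : (IXw n K).IsRadical := by
  have hker : IXw n K = RingHom.ker (phiH n K).toRingHom := by
    apply le_antisymm
    · intro g hgm
      exact RingHom.mem_ker.mpr (phi_IXw n K hgm)
    · intro g hgm
      exact mem_IXw_of_phi n K h3 (RingHom.mem_ker.mp hgm)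
  rw [hker]
  exact (RingHom.ker_isPrime _).isRadical

end HW

/-- For a connected labeled Hamiltonian graph `G` on `[n]`, the ideal
`I_G` is radical iff `G = K_n`. -/
theorem stmt_5 (n : ℕ) (K : Type*) [Field K] (hn : 3 ≤ n)
    (G : SimpleGraph (Fin n)) (hG : G.Connected) (hcyc : cycleG n ≤ G) :
    (hankelIdeal n K G).IsRadical ↔ G = ⊤ := by
  constructor
  · intro hrad
    have hadjall : ∀ a b : Fin n, a < b → G.Adj a b := by
      intro a b hab
      by_contra hnadj
      apply HW.not_mem_of_not_adj n K hab hnadj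
      have hr : hg n K a b ∈ (hankelIdeal n K G).radical := by
        rw [Ideal.radical_eq_sInf, Ideal.mem_sInf]
        rintro J ⟨hleJ, hJp⟩
        rw [HW.hg_eq_gN n K hab]
        exact HW.gN_mem_prime n K hcyc hn hJp hleJ (a:ℕ) (b:ℕ) hab b.isLt
      exact hrad hr
    ext a b
    simp only [SimpleGraph.top_adj]
    constructor
    · exact fun h => h.ne
    · intro hne
      rcases lt_or_gt_of_ne hne with h | h
      · exact hadjall a b h
      · exact (hadjall b a h).symm
  · rintro rfl
    exact HW.IXw_isRadical n K hn
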